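/- Let v be a normalized goods-allocation instance with m agents and n goods, i.e., there is a constant C with v_i([n]) = C for every agent i. Then there exist an allocation A and transfers q : Fin m → ℝ such that the mechanism (A, q) is proportional and A attains the optimal egalitarian welfare, i.e., min_{i ∈ Fin m} v_i(A_i) = OPT(v). -/
import Mathlib


open Finset

noncomputable section

/-- The cost to machine `i` of the bundle of jobs assigned to machine `k` under allocation `A`. -/
def bundleCost {m n : ℕ} (c : Fin m → Fin n → ℝ) (A : Fin n → Fin m) (i k : Fin m) : ℝ :=
  ∑ j ∈ Finset.univ.filter (fun j => A j = k), c i j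

/-- The total cost to machine `i` of all jobs, `c_i([n])`. -/
def rowSum {m n : ℕ} (c : Fin m → Fin n → ℝ) (i : Fin m) : ℝ :=
  ∑ j, c i j

/-- The egalitarian welfare of allocation `A`: the minimum value of any agent. -/
def egalWelfare {m n : ℕ} (hm : 0 < m) (v : Fin m → Fin n → ℝ) (A : Fin n → Fin m) : ℝ :=
  (Finset.univ : Finset (Fin m)).inf' ⟨⟨0, hm⟩, Finset.mem_univ _⟩ fun i => bundleCost v A i i

/-- The optimal (maximum) egalitarian welfare over all allocations. -/
def OPTgoods {m n : ℕ} (hm : 0 < m) (v : Fin m → Fin n → ℝ) : ℝ :=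
  (Finset.univ : Finset (Fin n → Fin m)).sup' ⟨fun _ => ⟨0, hm⟩, Finset.mem_univ _⟩
    fun X => egalWelfare hm v X

/-- In a finite type, iterating any self-map produces a cycle: a point `p`, a period `r > 0`
with `g^[r] p = p`, such that the points `g^[s] p` for `s < r` are pairwise distinct. -/
lemma iterate_cycle {m : ℕ} (hm : 0 < m) (g : Fin m → Fin m) :
    ∃ (p : Fin m) (r : ℕ), 0 < r ∧ g^[r] p = p ∧
      ∀ s t : ℕ, s < t → t < r → g^[s] p ≠ g^[t] p := by
  classical
  set z : Fin m := ⟨0, hm⟩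
  have hex : ∃ r, 0 < r ∧ ∃ p : Fin m, g^[r] p = p := by
    have hni : ¬ Function.Injective (fun a : Fin (m + 1) => g^[(a : ℕ)] z) := by
      intro hinj
      have := Fintype.card_le_of_injective _ hinj
      simpa using this
    rw [Function.not_injective_iff] at hni
    obtain ⟨a, b, hab, hne⟩ := hni
    have key : ∀ (a b : ℕ), a < b → g^[a] z = g^[b] z →
        ∃ r, 0 < r ∧ ∃ p : Fin m, g^[r] p = p := by
      intro a b hlt heq
      refine ⟨b - a, by omega, g^[a] z, ?_⟩
      rw [← Function.iterate_add_apply, show b - a + a = b by omega]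
      exact heq.symm
    rcases lt_trichotomy (a : ℕ) (b : ℕ) with h | h | h
    · exact key a b h hab
    · exact absurd (Fin.ext h) hne
    · exact key b a h hab.symm
  set r := Nat.find hex with hr
  obtain ⟨hrpos, p, hp⟩ := Nat.find_spec hex
  refine ⟨p, r, hrpos, hp, ?_⟩
  intro s t hst htr heq
  have hsmall : 0 < r - t + s ∧ r - t + s < r := by omega
  have : g^[r - t + s] p = p := by
    rw [Function.iterate_add_apply, heq, ← Function.iterate_add_apply,
      show r - t + t = r by omega]
    exact hp
  exact Nat.find_min hex hsmall.2 ⟨hsmall.1, p, this⟩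

/-- For normalized goods instances there is a proportional mechanism attaining the optimal
egalitarian welfare. -/
theorem stmt_13 {m n : ℕ} (hm : 2 ≤ m) (hn : 2 ≤ n)
    (v : Fin m → Fin n → ℝ) (hv : ∀ i j, 0 ≤ v i j)
    (C : ℝ) (hnorm : ∀ i : Fin m, rowSum v i = C) :
    ∃ (A : Fin n → Fin m) (q : Fin m → ℝ),
      (∀ i : Fin m,
        (1 / (m : ℝ)) * ∑ k : Fin m, (bundleCost v A i k - q k) ≤ bundleCost v A i i - q i) ∧
      egalWelfare (by omega) v A = OPTgoods (by omega) v := by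
  classical
  have hm0 : 0 < m := by omega
  -- every row of bundle costs sums to C
  have rowfact : ∀ (A : Fin n → Fin m) (i : Fin m), ∑ k, bundleCost v A i k = C := by
    intro A i
    rw [← hnorm i]
    exact Finset.sum_fiberwise _ _ _
  -- bundle costs of a permuted allocation
  have permfact : ∀ (A : Fin n → Fin m) (e : Fin m ≃ Fin m) (i k : Fin m),
      bundleCost v (fun j => e.symm (A j)) i k = bundleCost v A i (e k) := by
    intro A e i k
    unfold bundleCost
    apply Finset.sum_congr _ (fun _ _ => rfl)
    apply Finset.filter_congr
    intro j _
    simp [Equiv.symm_apply_eq]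
  -- the set of optimal allocations
  set OPT := OPTgoods hm0 v with hOPT
  set P : Finset (Fin n → Fin m) :=
    Finset.univ.filter (fun X => OPT ≤ egalWelfare hm0 v X) with hP
  have hPne : P.Nonempty := by
    obtain ⟨X, _, hX⟩ := Finset.exists_mem_eq_sup'
      (⟨fun _ => ⟨0, hm0⟩, Finset.mem_univ _⟩ : (Finset.univ : Finset (Fin n → Fin m)).Nonempty)
      (fun X => egalWelfare hm0 v X)
    refine ⟨X, Finset.mem_filter.mpr ⟨Finset.mem_univ X, ?_⟩⟩
    rw [hOPT]
    exact le_of_eq hX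
  have egal_le_OPT : ∀ X : Fin n → Fin m, egalWelfare hm0 v X ≤ OPT := by
    intro X
    exact Finset.le_sup' (fun X => egalWelfare hm0 v X) (Finset.mem_univ X)
  -- pick an optimal allocation maximizing total self-value
  obtain ⟨A, hAP, hAmax⟩ := Finset.exists_max_image P (fun X => ∑ i, bundleCost v X i i) hPne
  have hAopt : OPT ≤ egalWelfare hm0 v A := by
    simpa [hP] using hAP
  set M : Fin m → Fin m → ℝ := fun i k => bundleCost v A i k with hM
  set S : ℝ := ∑ i, M i i with hS
  -- Key claim : S ≥ C
  have hSC : C ≤ S := by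
    by_contra hlt
    push_neg at hlt
    -- for each i there is k with M k k < M i k
    have hg : ∀ i, ∃ k, M k k < M i k := by
      intro i
      have h : ∑ k, M k k < ∑ k, M i k := by
        rw [← hS, rowfact A i]
        exact hlt
      obtain ⟨k, _, hk⟩ := Finset.exists_lt_of_sum_lt h
      exact ⟨k, hk⟩
    choose g hgspec using hg
    obtain ⟨p, r, hrpos, hpr, hdist⟩ := iterate_cycle hm0 g
    set cyc : Finset (Fin m) := (Finset.range r).image (fun s => g^[s] p) with hcyc
    have hpcyc : p ∈ cyc := by
      simp only [hcyc, Finset.mem_image]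
      exact ⟨0, Finset.mem_range.mpr hrpos, rfl⟩
    have hgmem : ∀ x ∈ cyc, g x ∈ cyc := by
      intro x hx
      simp only [hcyc, Finset.mem_image, Finset.mem_range] at hx ⊢
      obtain ⟨s, hs, rfl⟩ := hx
      rcases Nat.lt_or_ge (s + 1) r with h | h
      · exact ⟨s + 1, h, Function.iterate_succ_apply' g s p⟩
      · refine ⟨0, hrpos, ?_⟩
        simp only [Function.iterate_zero, id]
        rw [← Function.iterate_succ_apply' g s p, show s.succ = r by omega, hpr]
    -- the exchange map
    set τ : Fin m → Fin m := fun x => if x ∈ cyc then g x else x with hτ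
    have hτcyc : ∀ x, τ x ∈ cyc ↔ x ∈ cyc := by
      intro x
      by_cases hx : x ∈ cyc
      · simp [hτ, hx, hgmem x hx]
      · simp [hτ, hx]
    -- uniqueness of representation on the cycle
    have hrep : ∀ s t, s < r → t < r → g^[s] p = g^[t] p → s = t := by
      intro s t hs ht heq
      rcases lt_trichotomy s t with h | h | h
      · exact absurd heq (hdist s t h ht)
      · exact h
      · exact absurd heq.symm (hdist t s h hs)
    have hτinj : Function.Injective τ := by
      intro x y hxy
      by_cases hx : x ∈ cyc <;> by_cases hy : y ∈ cyc
      · -- both on the cycle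
        simp only [hτ, if_pos hx, if_pos hy] at hxy
        simp only [hcyc, Finset.mem_image, Finset.mem_range] at hx hy
        obtain ⟨s, hs, rfl⟩ := hx
        obtain ⟨t, ht, rfl⟩ := hy
        -- reduce exponents mod r
        have norm : ∀ u : ℕ, u < r → g (g^[u] p) = g^[(u + 1) % r] p := by
          intro u hu
          rcases Nat.lt_or_ge (u + 1) r with h | h
          · rw [Nat.mod_eq_of_lt h, Function.iterate_succ_apply']
          · have hmod : (u + 1) % r = 0 := by
              rw [show u + 1 = r by omega]
              exact Nat.mod_self r
            rw [← Function.iterate_succ_apply' g u p, show u.succ = r by omega, hpr, hmod]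
            simp
        rw [norm s hs, norm t ht] at hxy
        have := hrep _ _ (Nat.mod_lt _ hrpos) (Nat.mod_lt _ hrpos) hxy
        have hst : s = t := by
          rcases Nat.lt_or_ge (s + 1) r with h1 | h1 <;> rcases Nat.lt_or_ge (t + 1) r with h2 | h2
          · rw [Nat.mod_eq_of_lt h1, Nat.mod_eq_of_lt h2] at this; omega
          · rw [Nat.mod_eq_of_lt h1, show t + 1 = r by omega, Nat.mod_self] at this; omega
          · rw [Nat.mod_eq_of_lt h2, show s + 1 = r by omega, Nat.mod_self] at this; omega
          · omega
        rw [hst]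
      · exact absurd ((hτcyc y).mp (hxy ▸ (hτcyc x).mpr hx)) hy
      · exact absurd ((hτcyc x).mp (hxy ▸ (hτcyc y).mpr hy)) hx
      · simpa [hτ, if_neg hx, if_neg hy] using hxy
    have hτbij : Function.Bijective τ := Finite.injective_iff_bijective.mp hτinj
    set e : Fin m ≃ Fin m := Equiv.ofBijective τ hτbij with he
    have heapp : ∀ x, e x = τ x := fun x => rfl
    -- the improved allocation
    set A' : Fin n → Fin m := fun j => e.symm (A j) with hA'
    have hbc' : ∀ i k, bundleCost v A' i k = M i (τ k) := by
      intro i k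
      rw [hA', permfact A e i k, heapp]
    -- pointwise comparison
    have hpt : ∀ x, M (τ x) (τ x) ≤ M x (τ x) := by
      intro x
      by_cases hx : x ∈ cyc
      · simp only [hτ, if_pos hx]
        exact le_of_lt (hgspec x)
      · simp [hτ, if_neg hx]
    -- A' is optimal
    have hA'P : A' ∈ P := by
      simp only [hP, Finset.mem_filter, Finset.mem_univ, true_and]
      apply le_trans hAopt
      unfold egalWelfare
      apply Finset.le_inf'
      intro i _
      rw [hbc']
      calc (Finset.univ : Finset (Fin m)).inf' _ (fun i => bundleCost v A i i)
          ≤ M (τ i) (τ i) := Finset.inf'_le _ (Finset.mem_univ (τ i))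
        _ ≤ M i (τ i) := hpt i
    -- A' has strictly larger self-value sum
    have hsum : S < ∑ i, bundleCost v A' i i := by
      have h1 : ∑ x, M (τ x) (τ x) < ∑ x, M x (τ x) := by
        apply Finset.sum_lt_sum (fun x _ => hpt x)
        refine ⟨p, Finset.mem_univ p, ?_⟩
        simp only [hτ, if_pos hpcyc]
        exact hgspec p
      have h2 : ∑ x, M (τ x) (τ x) = S := by
        rw [hS]
        exact Equiv.sum_comp e (fun k => M k k)
      calc S = ∑ x, M (τ x) (τ x) := h2.symm
        _ < ∑ x, M x (τ x) := h1
        _ = ∑ i, bundleCost v A' i i := by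
            apply Finset.sum_congr rfl
            intro x _
            rw [hbc']
    exact absurd (hAmax A' hA'P) (not_le.mpr hsum)
  -- conclude with transfers q i = M i i
  refine ⟨A, fun i => M i i, ?_, le_antisymm (egal_le_OPT A) hAopt⟩
  intro i
  have hsum : ∑ k : Fin m, (bundleCost v A i k - M k k) = C - S := by
    rw [Finset.sum_sub_distrib, rowfact A i, hS]
  rw [hsum]
  have h1 : (1 : ℝ) / m * (C - S) ≤ 0 := by
    apply mul_nonpos_of_nonneg_of_nonpos
    · positivity
    · linarith
  have h2 : bundleCost v A i i - M i i = 0 := by simp [hM]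
  linarith

end
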